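/- Let q > 0 be a real number, k ≤ n natural numbers, and A_0,…,A_n and B_0,…,B_n real numbers. The following are equivalent: (a) Σ_{j=0}^n A_j x^{n-j} y^j = q^{k-n} Σ_{j=0}^n B_j (x+(q-1)y)^{n-j} (x-y)^j as polynomials; (b) for all 0 ≤ r ≤ n, Σ_{j=0}^n C(n-j, r) A_j = q^{k-r} Σ_{j=0}^n C(n-j, r-j) B_j. -/
import Mathlib

open Finset

private lemma term1 (n j : ℕ) (hj : j ≤ n) (a x y : ℝ) :
    a * x ^ (n - j) * y ^ j
      = ∑ r ∈ range (n+1), ((n-j).choose r : ℝ) * a * ((x-y)^r * y^(n-r)) := by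
  have hx : x ^ (n-j) = ((x-y)+y)^(n-j) := by ring_nf
  rw [hx, add_pow, Finset.mul_sum, Finset.sum_mul]
  rw [← Finset.sum_subset (Finset.range_subset_range.2 (by omega : n - j + 1 ≤ n + 1))]
  · apply Finset.sum_congr rfl
    intro m hm
    simp only [Finset.mem_range] at hm
    have : y ^ (n - j - m) * y ^ j = y ^ (n - m) := by
      rw [← pow_add]; congr 1; omega
    rw [mul_comm ((x-y)^m) (y^(n-j-m))] at *
    calc a * (y ^ (n - j - m) * (x - y) ^ m * ((n - j).choose m : ℝ)) * y ^ j
        = ((n-j).choose m : ℝ) * a * ((x-y)^m * (y ^ (n-j-m) * y ^ j)) := by ring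
      _ = ((n-j).choose m : ℝ) * a * ((x-y)^m * y^(n-m)) := by rw [this]
  · intro m _ hm
    simp only [Finset.mem_range] at hm
    have : (n - j).choose m = 0 := Nat.choose_eq_zero_of_lt (by omega)
    simp [this]

private lemma lhs_expand (n : ℕ) (A : ℕ → ℝ) (x y : ℝ) :
    ∑ j ∈ range (n+1), A j * x ^ (n-j) * y ^ j
      = ∑ r ∈ range (n+1), ((x-y)^r * y^(n-r)) *
          ∑ j ∈ range (n+1), ((n-j).choose r : ℝ) * A j := by
  have : ∀ j ∈ range (n+1), A j * x ^ (n-j) * y ^ j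
      = ∑ r ∈ range (n+1), ((n-j).choose r : ℝ) * A j * ((x-y)^r * y^(n-r)) := by
    intro j hj
    exact term1 n j (by simpa using Nat.lt_succ_iff.mp (Finset.mem_range.mp hj)) (A j) x y
  rw [Finset.sum_congr rfl this, Finset.sum_comm]
  apply Finset.sum_congr rfl
  intro r _
  rw [Finset.mul_sum]
  apply Finset.sum_congr rfl
  intro j _
  ring

private lemma term2 (q : ℝ) (n j : ℕ) (hj : j ≤ n) (b x y : ℝ) :
    b * (x + (q-1)*y) ^ (n-j) * (x-y) ^ j
      = ∑ r ∈ range (n+1), (if j ≤ r then ((n-j).choose (r-j) : ℝ) * b else 0) *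
          ((x-y)^r * (q*y)^(n-r)) := by
  have hx : (x + (q-1)*y) ^ (n-j) = ((x-y)+(q*y))^(n-j) := by ring_nf
  rw [hx, add_pow, Finset.mul_sum, Finset.sum_mul]
  -- RHS: sum over r with guard j ≤ r
  have hsplit : ∑ r ∈ range (n+1), (if j ≤ r then ((n-j).choose (r-j) : ℝ) * b else 0) *
          ((x-y)^r * (q*y)^(n-r))
      = ∑ r ∈ Finset.Ico j (n+1), ((n-j).choose (r-j) : ℝ) * b * ((x-y)^r * (q*y)^(n-r)) := by
    rw [← Finset.sum_filter_add_sum_filter_not (range (n+1)) (fun r => j ≤ r)]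
    have h1 : Finset.filter (fun r => j ≤ r) (range (n+1)) = Finset.Ico j (n+1) := by
      ext m; simp [Nat.lt_succ_iff]; omega
    rw [h1]
    have h2 : ∑ r ∈ Finset.filter (fun r => ¬ j ≤ r) (range (n+1)),
        (if j ≤ r then ((n-j).choose (r-j) : ℝ) * b else 0) * ((x-y)^r * (q*y)^(n-r)) = 0 := by
      apply Finset.sum_eq_zero
      intro r hr
      simp only [Finset.mem_filter] at hr
      simp [hr.2]
    rw [h2, add_zero]
    apply Finset.sum_congr rfl
    intro r hr
    simp only [Finset.mem_Ico] at hr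
    simp [hr.1]
  rw [hsplit, Finset.sum_Ico_eq_sum_range]
  have hrange : n + 1 - j = n - j + 1 := by omega
  rw [hrange]
  apply Finset.sum_congr rfl
  intro m hm
  simp only [Finset.mem_range] at hm
  have h1 : j + m - j = m := by omega
  have h2 : n - (j + m) = n - j - m := by omega
  have h3 : (x-y)^(j+m) = (x-y)^m * (x-y)^j := by rw [pow_add]; ring
  rw [h1, h2, h3]
  ring

private lemma rhs_expand (q : ℝ) (n : ℕ) (B : ℕ → ℝ) (x y : ℝ) :
    ∑ j ∈ range (n+1), B j * (x + (q-1)*y) ^ (n-j) * (x-y) ^ j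
      = ∑ r ∈ range (n+1), ((x-y)^r * y^(n-r)) * (q^(n-r) *
          ∑ j ∈ range (n+1), if j ≤ r then ((n-j).choose (r-j) : ℝ) * B j else 0) := by
  have : ∀ j ∈ range (n+1), B j * (x + (q-1)*y) ^ (n-j) * (x-y) ^ j
      = ∑ r ∈ range (n+1), (if j ≤ r then ((n-j).choose (r-j) : ℝ) * B j else 0) *
          ((x-y)^r * (q*y)^(n-r)) := by
    intro j hj
    exact term2 q n j (Nat.lt_succ_iff.mp (Finset.mem_range.mp hj)) (B j) x y
  rw [Finset.sum_congr rfl this, Finset.sum_comm]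
  apply Finset.sum_congr rfl
  intro r _
  rw [Finset.mul_sum, Finset.mul_sum]
  apply Finset.sum_congr rfl
  intro j _
  rw [mul_pow]
  ring

private lemma coeff_ext (N : ℕ) (f g : ℕ → ℝ)
    (h : ∀ s : ℝ, ∑ r ∈ range N, f r * s^r = ∑ r ∈ range N, g r * s^r) :
    ∀ r < N, f r = g r := by
  intro r hr
  have hP : (∑ i ∈ range N, Polynomial.C (f i) * Polynomial.X ^ i : Polynomial ℝ)
      = ∑ i ∈ range N, Polynomial.C (g i) * Polynomial.X ^ i := by
    apply Polynomial.funext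
    intro s
    simp only [Polynomial.eval_finset_sum, Polynomial.eval_mul, Polynomial.eval_C,
      Polynomial.eval_pow, Polynomial.eval_X]
    exact h s
  have := congrArg (fun p => Polynomial.coeff p r) hP
  simpa [Polynomial.finset_sum_coeff, Polynomial.coeff_C_mul, Polynomial.coeff_X_pow,
    Finset.mem_range.mpr hr] using this

theorem mac_iff_form4 (q : ℝ) (hq : 0 < q) (k n : ℕ) (hkn : k ≤ n) (A B : ℕ → ℝ) :
    (∀ x y : ℝ,
      ∑ j ∈ Finset.range (n + 1), A j * x ^ (n - j) * y ^ j =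
      q ^ ((k : ℤ) - (n : ℤ)) *
        ∑ j ∈ Finset.range (n + 1), B j * (x + (q - 1) * y) ^ (n - j) * (x - y) ^ j) ↔
    (∀ r ≤ n,
      ∑ j ∈ Finset.range (n + 1), ((n - j).choose r : ℝ) * A j =
      q ^ ((k : ℤ) - (r : ℤ)) *
        ∑ j ∈ Finset.range (n + 1),
          if j ≤ r then ((n - j).choose (r - j) : ℝ) * B j else 0) := by
  have hq0 : q ≠ 0 := ne_of_gt hq
  have hqpow : ∀ r : ℕ, r ≤ n → q ^ ((k:ℤ) - (n:ℤ)) * q ^ (n - r)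
      = q ^ ((k:ℤ) - (r:ℤ)) := by
    intro r hr
    have : (q:ℝ) ^ (n - r) = q ^ ((n:ℤ) - (r:ℤ)) := by
      rw [← zpow_natCast]
      congr 1
      omega
    rw [this, ← zpow_add₀ hq0]
    congr 1
    ring
  -- key: both sides expand in the (x-y)^r * y^(n-r) basis
  have key : ∀ x y : ℝ, q ^ ((k : ℤ) - (n : ℤ)) *
        ∑ j ∈ Finset.range (n + 1), B j * (x + (q - 1) * y) ^ (n - j) * (x - y) ^ j
      = ∑ r ∈ range (n+1), ((x-y)^r * y^(n-r)) *
          (q ^ ((k:ℤ) - (r:ℤ)) *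
            ∑ j ∈ range (n+1), if j ≤ r then ((n-j).choose (r-j) : ℝ) * B j else 0) := by
    intro x y
    rw [rhs_expand, Finset.mul_sum]
    apply Finset.sum_congr rfl
    intro r hr
    rw [← hqpow r (Nat.lt_succ_iff.mp (Finset.mem_range.mp hr))]
    ring
  constructor
  · intro h r hr
    apply coeff_ext (n+1)
      (fun r => ∑ j ∈ range (n+1), ((n-j).choose r : ℝ) * A j)
      (fun r => q ^ ((k:ℤ) - (r:ℤ)) *
        ∑ j ∈ range (n+1), if j ≤ r then ((n-j).choose (r-j) : ℝ) * B j else 0)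
      _ r (Nat.lt_succ_iff.mpr hr)
    intro s
    have h1 := h (s+1) 1
    rw [lhs_expand, key] at h1
    simpa [mul_comm] using h1
  · intro h x y
    rw [lhs_expand, key]
    apply Finset.sum_congr rfl
    intro r hr
    rw [h r (Nat.lt_succ_iff.mp (Finset.mem_range.mp hr))]
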